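/- If a measurable subset V ⊆ ℝ² is invariant under translation by a lattice L with fundamental domain of area S_Σ, and the portion of V in a fundamental domain has area S_Δ > 0 with ρ = S_Σ/S_Δ, then for any finite set P ⊂ ℝ² with |P| ≤ ⌈ρ⌉ − 1 (the greatest integer strictly less than ρ) there exists a translation vector t ∈ ℝ² such that (P + t) ∩ V = ∅. -/

import Mathlib

open MeasureTheory Pointwise

/-- Pritikin's pigeonhole argument: a lattice-periodic void set `V` occupying a
fraction `1/ρ` of the plane can be avoided, by a suitable translation, by any
point set with at most `⌈ρ⌉ - 1` points. -/
theorem pigeonhole_avoid_voids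
    (V : Set (ℝ × ℝ)) (hV : MeasurableSet V)
    (v₁ v₂ : ℝ × ℝ) (hind : LinearIndependent ℝ ![v₁, v₂])
    (hper₁ : ∀ p : ℝ × ℝ, p + v₁ ∈ V ↔ p ∈ V)
    (hper₂ : ∀ p : ℝ × ℝ, p + v₂ ∈ V ↔ p ∈ V)
    (D : Set (ℝ × ℝ))
    (hD : D = (fun t : ℝ × ℝ => t.1 • v₁ + t.2 • v₂) '' (Set.Ico 0 1 ×ˢ Set.Ico 0 1))
    (Stot Svoid ρ : ℝ)
    (hStot : Stot = (volume D).toReal)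
    (hSvoid : Svoid = (volume (V ∩ D)).toReal) (hSvoidpos : 0 < Svoid)
    (hρ : ρ = Stot / Svoid) :
    ∀ P : Finset (ℝ × ℝ), (P.card : ℤ) ≤ ⌈ρ⌉ - 1 →
      ∃ t : ℝ × ℝ, ∀ p ∈ P, p + t ∉ V := by
  intro P hP
  classical
  have hcard : Fintype.card (Fin 2) = Module.finrank ℝ (ℝ × ℝ) := by simp
  set b := basisOfLinearIndependentOfCardEqFinrank hind hcard with hb
  have hbcoe : (b : Fin 2 → ℝ × ℝ) = ![v₁, v₂] := by
    rw [hb, coe_basisOfLinearIndependentOfCardEqFinrank]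
  have hb0 : b 0 = v₁ := by rw [hbcoe]; rfl
  have hb1 : b 1 = v₂ := by rw [hbcoe]; rfl
  -- D is the fundamental domain of b
  have hDF : D = ZSpan.fundamentalDomain b := by
    rw [hD]
    ext x
    rw [ZSpan.mem_fundamentalDomain]
    constructor
    · rintro ⟨t, ⟨ht1, ht2⟩, rfl⟩
      intro i
      change b.repr (t.1 • v₁ + t.2 • v₂) i ∈ Set.Ico 0 1
      have hx : t.1 • v₁ + t.2 • v₂ = t.1 • b 0 + t.2 • b 1 := by rw [hb0, hb1]
      rw [hx]
      rw [Set.mem_Ico] at ht1 ht2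
      fin_cases i <;>
        simp only [map_add, Finsupp.coe_add, Pi.add_apply, LinearEquiv.map_smul,
          Finsupp.coe_smul, Pi.smul_apply, Module.Basis.repr_self, smul_eq_mul,
          Finsupp.single_apply] <;>
        norm_num [Fin.ext_iff, Set.mem_Ico] <;>
        first
        | exact ⟨ht1.1, ht1.2⟩
        | exact ⟨ht2.1, ht2.2⟩
    · intro h
      refine ⟨(b.repr x 0, b.repr x 1), ⟨h 0, h 1⟩, ?_⟩
      have hs := b.sum_repr x
      rw [Fin.sum_univ_two, hb0, hb1] at hs
      simpa using hs
  set L := Submodule.span ℤ (Set.range (b : Fin 2 → ℝ × ℝ)) with hL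
  -- V is invariant under the lattice
  have hinv : ∀ g ∈ L, ∀ x : ℝ × ℝ, x + g ∈ V ↔ x ∈ V := by
    have hz : ∀ g : ℝ × ℝ, (∀ x, x + g ∈ V ↔ x ∈ V) →
        ∀ z : ℤ, ∀ x, x + z • g ∈ V ↔ x ∈ V := by
      intro g hg z
      have hneg : ∀ x, x + (-g) ∈ V ↔ x ∈ V := by
        intro x
        have := hg (x - g)
        rw [sub_add_cancel] at this
        rw [← sub_eq_add_neg, this]
      induction z using Int.induction_on with
      | zero => intro x; simp
      | succ n ih =>
          intro x
          have : ((n : ℤ) + 1) • g = (n : ℤ) • g + g := by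
            rw [add_smul, one_smul]
          rw [this, ← add_assoc, hg, ih]
      | pred n ih =>
          intro x
          have : (-(n : ℤ) - 1) • g = (-(n : ℤ)) • g + (-g) := by
            rw [sub_smul, one_smul, sub_eq_add_neg]
          rw [this, ← add_assoc, hneg, ih]
    intro g hg
    induction hg using Submodule.span_induction with
    | mem g hgm =>
        obtain ⟨i, rfl⟩ := hgm
        fin_cases i
        · have : b ⟨0, by norm_num⟩ = v₁ := hb0
          rw [this]; exact hper₁
        · have : b ⟨1, by norm_num⟩ = v₂ := hb1
          rw [this]; exact hper₂
    | zero => intro x; simp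
    | add g₁ g₂ _ _ h₁ h₂ =>
        intro x
        rw [← add_assoc, h₂, h₁]
    | smul z g _ h => exact hz g h z
  have hFD : IsAddFundamentalDomain L (ZSpan.fundamentalDomain b) volume :=
    ZSpan.isAddFundamentalDomain b volume
  set F := ZSpan.fundamentalDomain b with hF
  -- invariance of V under the L-action
  have hVinv : ∀ g : L, (fun x => g +ᵥ x) ⁻¹' V = V := by
    intro g
    ext x
    simp only [Set.mem_preimage]
    have hgx : g +ᵥ x = x + (g : ℝ × ℝ) := by
      show (g : ℝ × ℝ) + x = x + (g : ℝ × ℝ)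
      exact add_comm _ _
    rw [hgx]
    exact hinv g g.2 x
  haveI : MeasurableVAdd L (ℝ × ℝ) :=
    @MeasurableVAdd.mk L (ℝ × ℝ) _ _ _ ⟨fun g => (measurable_const_add (g : ℝ × ℝ) : Measurable fun x : ℝ × ℝ => (g : ℝ × ℝ) + x)⟩
     (fun x => measurable_subtype_coe.add_const x)
  haveI : VAddInvariantMeasure L (ℝ × ℝ) volume :=
    ⟨fun g s hs => by
      show volume ((fun x => (g : ℝ × ℝ) + x) ⁻¹' s) = volume s
      exact measure_preimage_add volume _ s⟩
  -- each bad set has measure Svoid inside F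
  have hmeasp : ∀ p : ℝ × ℝ, volume ({t : ℝ × ℝ | p + t ∈ V} ∩ F) = volume (V ∩ F) := by
    intro p
    haveI : VAddCommClass (ℝ × ℝ) L (ℝ × ℝ) :=
      ⟨fun a g x => by
        show a + ((g : ℝ × ℝ) + x) = (g : ℝ × ℝ) + (a + x)
        ring⟩
    have hFD' : IsAddFundamentalDomain L (p +ᵥ F) volume := hFD.vadd_of_comm p
    have h1 : {t : ℝ × ℝ | p + t ∈ V} ∩ F = (fun t => p + t) ⁻¹' (V ∩ (p +ᵥ F)) := by
      ext t
      simp only [Set.mem_inter_iff, Set.mem_preimage, Set.mem_setOf_eq,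
        Set.mem_vadd_set, vadd_eq_add]
      constructor
      · rintro ⟨h1, h2⟩; exact ⟨h1, t, h2, rfl⟩
      · rintro ⟨h1, s, hs, hst⟩
        have : s = t := by
          have := hst
          simpa [add_right_cancel_iff] using this
        exact ⟨h1, this ▸ hs⟩
    rw [h1, measure_preimage_add]
    exact hFD'.measure_set_eq hFD hV hVinv
  -- measure bounds
  have hFbound : volume F ≠ ⊤ :=
    (ZSpan.fundamentalDomain_isBounded b).measure_lt_top.ne
  have hVF_ne_top : volume (V ∩ F) ≠ ⊤ :=
    ((measure_mono Set.inter_subset_right).trans_lt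
      (ZSpan.fundamentalDomain_isBounded b).measure_lt_top).ne
  -- the union of bad sets does not cover F
  set B := ⋃ p ∈ P, {t : ℝ × ℝ | p + t ∈ V} with hB
  have hBF : volume (B ∩ F) ≤ (P.card : ENNReal) * volume (V ∩ F) := by
    have : B ∩ F = ⋃ p ∈ P, ({t : ℝ × ℝ | p + t ∈ V} ∩ F) := by
      rw [hB]; ext x; simp [Set.mem_iUnion, and_assoc]; tauto
    rw [this]
    calc volume (⋃ p ∈ P, ({t : ℝ × ℝ | p + t ∈ V} ∩ F))
        ≤ ∑ p ∈ P, volume ({t : ℝ × ℝ | p + t ∈ V} ∩ F) := measure_biUnion_finset_le _ _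
      _ = ∑ _p ∈ P, volume (V ∩ F) := Finset.sum_congr rfl fun p _ => hmeasp p
      _ = (P.card : ENNReal) * volume (V ∩ F) := by
          rw [Finset.sum_const, nsmul_eq_mul]
  -- real-number comparison
  have hcardlt : (P.card : ℝ) < ρ := by
    have h1 : (P.card : ℝ) ≤ (⌈ρ⌉ : ℝ) - 1 := by
      have : (P.card : ℝ) ≤ (⌈ρ⌉ : ℤ) - 1 := by exact_mod_cast hP
      push_cast at this
      linarith
    have h2 : (⌈ρ⌉ : ℝ) < ρ + 1 := Int.ceil_lt_add_one ρ
    linarith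
  have hSvoid' : Svoid = (volume (V ∩ F)).toReal := by rw [hSvoid, hDF]
  have hStot' : Stot = (volume F).toReal := by rw [hStot, hDF]
  have hlt : (P.card : ENNReal) * volume (V ∩ F) < volume F := by
    rw [← ENNReal.toReal_lt_toReal (by
          exact ENNReal.mul_ne_top (by simp) hVF_ne_top) hFbound]
    rw [ENNReal.toReal_mul, ENNReal.toReal_natCast, ← hSvoid', ← hStot']
    have : ρ * Svoid = Stot := by
      rw [hρ, div_mul_cancel₀ _ hSvoidpos.ne']
    nlinarith
  have hlt2 : volume (B ∩ F) < volume F := lt_of_le_of_lt hBF hlt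
  have hnsub : ¬ F ⊆ B := by
    intro hsub
    have : B ∩ F = F := by
      ext x; simp only [Set.mem_inter_iff, and_iff_right_iff_imp]
      intro hx; exact hsub hx
    rw [this] at hlt2
    exact lt_irrefl _ hlt2
  obtain ⟨t, htF, htB⟩ := Set.not_subset.mp hnsub
  refine ⟨t, fun p hp hpt => htB ?_⟩
  rw [hB]
  exact Set.mem_biUnion hp hpt
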